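/- Let E/F be a tamely ramified finite Galois extension of p-adic fields with Γ = Gal(E/F), Δ = Γ₀ the inertia subgroup and B = E^Δ. Suppose v_E(D_{E/F}) is even, so that A := A_{E/F} exists, and let b ∈ E be such that A = O_B[Δ]·b. Define h_b : Γ → E by h_b(g) = g(b) if g ∈ Δ and h_b(g) = 0 if g ∈ Γ∖Δ. Then h_b belongs to Map_Δ(Γ, A) and h_b generates Map_Δ(Γ, A) freely as an O_B[Γ]-module. -/

import Mathlib

set_option synthInstance.maxHeartbeats 1000000
set_option maxHeartbeats 1000000

open scoped nonZeroDivisors TensorProduct Classical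

/-- `σ` lies in the `i`-th ramification group (in lower numbering) of `Gal(E/F)` relative to
the ideal `M` of the valuation ring `O_E = integralClosure ℤ_[p] E`:
`σ(x) − x ∈ M^{i+1}` for all `x ∈ O_E`. -/
def inRamificationGroup (p : ℕ) [Fact p.Prime] (F E : Type*) [Field F] [Field E]
    [Algebra ℚ_[p] E] [Algebra ℤ_[p] E] [IsScalarTower ℤ_[p] ℚ_[p] E] [Algebra F E]
    (M : Ideal ↥(integralClosure ℤ_[p] E)) (i : ℕ) (σ : E ≃ₐ[F] E) : Prop :=
  ∀ x : ↥(integralClosure ℤ_[p] E), ∃ y ∈ M ^ (i + 1), (y : E) = σ (x : E) - (x : E)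

/-- The square root of the inverse different `A_{E/F} = m_E^{−d/2}` (where `d = v_E(𝔇_{E/F})`),
viewed as a submodule of `E` over the valuation ring `O_E`. -/
noncomputable def sqrtInvDiff (p : ℕ) [Fact p.Prime] (E : Type*) [Field E]
    [Algebra ℚ_[p] E] [FiniteDimensional ℚ_[p] E]
    [Algebra ℤ_[p] E] [IsScalarTower ℤ_[p] ℚ_[p] E]
    [IsDedekindDomain ↥(integralClosure ℤ_[p] E)]
    [IsFractionRing ↥(integralClosure ℤ_[p] E) E]
    (M : Ideal ↥(integralClosure ℤ_[p] E)) (d : ℕ) :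
    Submodule ↥(integralClosure ℤ_[p] E) E :=
  (((M : FractionalIdeal (↥(integralClosure ℤ_[p] E))⁰ E) ^ (-((d / 2 : ℕ) : ℤ)) :
    FractionalIdeal (↥(integralClosure ℤ_[p] E))⁰ E) : Submodule ↥(integralClosure ℤ_[p] E) E)

/-- The map `h_b : Γ → E` attached to `b ∈ E` and the subgroup `Δ ≤ Γ = Gal(E/F)`:
`h_b(g) = g(b)` for `g ∈ Δ` and `h_b(g) = 0` otherwise. -/
noncomputable def hMap (F E : Type*) [Field F] [Field E] [Algebra F E]
    (Δ : Subgroup (E ≃ₐ[F] E)) (b : E) : (E ≃ₐ[F] E) → E :=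
  fun g => if g ∈ Δ then g b else 0

/-- **`h_b` is a free generator of `Map_Δ(Γ, A)` over `O_B[Γ]`.**
Let `E/F` be a tamely ramified finite Galois extension of `p`-adic fields with
`Γ = Gal(E/F)`, `Δ = Γ₀` the inertia subgroup and `B = E^Δ`.  Suppose `v_E(𝔇_{E/F})` is
even, so that `A := A_{E/F}` exists, and let `b ∈ E` be such that `A = O_B[Δ]·b`.  Define
`h_b : Γ → E` by `h_b(g) = g(b)` if `g ∈ Δ` and `h_b(g) = 0` otherwise.  Then `h_b` belongs
to `Map_Δ(Γ, A)` and generates `Map_Δ(Γ, A)` freely as an `O_B[Γ]`-module: every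
`f ∈ Map_Δ(Γ, A)` has a unique expansion `f = Σ_γ c_γ·(γ·h_b)` with coefficients
`c_γ ∈ O_B`. -/
theorem stmt11 (p : ℕ) [Fact p.Prime] (F E : Type*) [Field F] [Field E]
    [Algebra ℚ_[p] F] [FiniteDimensional ℚ_[p] F]
    [Algebra ℚ_[p] E] [FiniteDimensional ℚ_[p] E]
    [Algebra F E] [IsScalarTower ℚ_[p] F E] [IsGalois F E]
    [Algebra ℤ_[p] F] [IsScalarTower ℤ_[p] ℚ_[p] F]
    [Algebra ℤ_[p] E] [IsScalarTower ℤ_[p] ℚ_[p] E]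
    [Algebra ↥(integralClosure ℤ_[p] F) ↥(integralClosure ℤ_[p] E)]
    [Algebra ↥(integralClosure ℤ_[p] F) E]
    [IsScalarTower ↥(integralClosure ℤ_[p] F) ↥(integralClosure ℤ_[p] E) E]
    [IsScalarTower ↥(integralClosure ℤ_[p] F) F E]
    [NoZeroSMulDivisors ↥(integralClosure ℤ_[p] F) ↥(integralClosure ℤ_[p] E)]
    [IsIntegrallyClosed ↥(integralClosure ℤ_[p] F)]
    [IsDedekindDomain ↥(integralClosure ℤ_[p] E)]
    [IsFractionRing ↥(integralClosure ℤ_[p] E) E]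
    [Fintype (E ≃ₐ[F] E)]
    (M : Ideal ↥(integralClosure ℤ_[p] E)) (hM : M.IsMaximal)
    (htame : ∀ σ : E ≃ₐ[F] E, inRamificationGroup p F E M 1 σ → σ = 1)
    (Δ : Subgroup (E ≃ₐ[F] E)) (hΔ : ∀ σ, σ ∈ Δ ↔ inRamificationGroup p F E M 0 σ)
    (B' : IntermediateField F E) (hB' : B' = IntermediateField.fixedField Δ)
    [Algebra ℤ_[p] ↥B'] [IsScalarTower ℤ_[p] ↥B' E]
    (d : ℕ)
    (hd : differentIdeal ↥(integralClosure ℤ_[p] F) ↥(integralClosure ℤ_[p] E) = M ^ d)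
    (hEven : Even d)
    (b : E)
    (hb : ∀ x : E, x ∈ sqrtInvDiff p E M d ↔
      ∃ c : ↥Δ → ↥(integralClosure ℤ_[p] ↥B'),
        x = ∑ h : ↥Δ, ((c h : ↥B') : E) * (h : E ≃ₐ[F] E) b) :
    ((∀ h : E ≃ₐ[F] E, h ∈ Δ → ∀ g : E ≃ₐ[F] E,
        hMap F E Δ b (h * g) = h (hMap F E Δ b g)) ∧
      ∀ g : E ≃ₐ[F] E, hMap F E Δ b g ∈ sqrtInvDiff p E M d) ∧
    ∀ f : (E ≃ₐ[F] E) → E,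
      ((∀ h : E ≃ₐ[F] E, h ∈ Δ → ∀ g : E ≃ₐ[F] E, f (h * g) = h (f g)) ∧
        ∀ g : E ≃ₐ[F] E, f g ∈ sqrtInvDiff p E M d) →
      ∃! c : (E ≃ₐ[F] E) → ↥(integralClosure ℤ_[p] ↥B'),
        ∀ g : E ≃ₐ[F] E,
          f g = ∑ γ : E ≃ₐ[F] E, ((c γ : ↥B') : E) * hMap F E Δ b (g * γ) := by
    classical
  subst hB'
  -- notation
  haveI : FiniteDimensional F E := FiniteDimensional.right ℚ_[p] F E
  haveI : Algebra.IsAlgebraic ℚ_[p] E := Algebra.IsAlgebraic.of_finite ℚ_[p] E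
  set v : ↥Δ → E := fun δ => (δ : E ≃ₐ[F] E) b with hv
  -- elements of the fixed field are fixed
  have hfix : ∀ σ : E ≃ₐ[F] E, σ ∈ Δ → ∀ β : ↥(IntermediateField.fixedField Δ), σ (β : E) = (β : E) :=
    fun σ hσ β => β.2 ⟨σ, hσ⟩
  -- injectivity of the base maps
  have hinjE : Function.Injective (algebraMap ℤ_[p] E) := by
    rw [IsScalarTower.algebraMap_eq ℤ_[p] ℚ_[p] E]
    exact (algebraMap ℚ_[p] E).injective.comp (IsFractionRing.injective ℤ_[p] ℚ_[p])
  -- M is not the zero ideal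
  have hMne : M ≠ ⊥ := by
    intro h
    have hinj : Function.Injective (algebraMap ℤ_[p] ↥(integralClosure ℤ_[p] E)) := by
      have h2 := hinjE
      rw [IsScalarTower.algebraMap_eq ℤ_[p] ↥(integralClosure ℤ_[p] E) E,
        RingHom.coe_comp] at h2
      exact Function.Injective.of_comp h2
    haveI := hM
    have hcom : (M.comap (algebraMap ℤ_[p] ↥(integralClosure ℤ_[p] E))).IsMaximal :=
      Ideal.isMaximal_comap_of_isIntegral_of_isMaximal M
    rw [h, ← RingHom.ker_eq_comap_bot, (RingHom.injective_iff_ker_eq_bot _).mp hinj] at hcom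
    have hp0 : (p : ℤ_[p]) ≠ 0 := by
      intro h0
      have hnp := PadicInt.norm_p (p := p)
      rw [h0, norm_zero] at hnp
      have h1 : (1:ℝ) < p := by exact_mod_cast (Fact.out : p.Prime).one_lt
      have : (0:ℝ) < (p:ℝ)⁻¹ := by positivity
      linarith
    have hunit : IsUnit (p : ℤ_[p]) := by
      by_cases hI : Ideal.span {(p : ℤ_[p])} = ⊤
      · exact (Ideal.span_singleton_eq_top).mp hI
      · have hbi := hcom.eq_of_le hI bot_le
        exact absurd (Ideal.span_singleton_eq_bot.mp hbi.symm) hp0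
    rw [PadicInt.isUnit_iff, PadicInt.norm_p] at hunit
    have h1 : (1:ℝ) < p := by exact_mod_cast (Fact.out : p.Prime).one_lt
    rw [inv_eq_one] at hunit
    linarith
  -- A = sqrtInvDiff is a nonzero submodule
  have hAne : sqrtInvDiff p E M d ≠ ⊥ := by
    intro h
    exact zpow_ne_zero (-((d / 2 : ℕ) : ℤ)) (FractionalIdeal.coeIdeal_ne_zero.mpr hMne)
      (FractionalIdeal.coeToSubmodule_eq_bot.mp h)
  obtain ⟨a, haA, ha0⟩ := Submodule.ne_bot_iff _ |>.mp hAne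
  -- every element of A lies in the B'-span of the (δ b)
  have hsub : ∀ x ∈ sqrtInvDiff p E M d, x ∈ Submodule.span ↥(IntermediateField.fixedField Δ) (Set.range v) := by
    intro x hx
    obtain ⟨c, hc⟩ := (hb x).mp hx
    rw [hc]
    refine Submodule.sum_mem _ (fun h _ => ?_)
    have : ((c h : ↥(IntermediateField.fixedField Δ)) : E) * (h : E ≃ₐ[F] E) b = (c h : ↥(IntermediateField.fixedField Δ)) • v h := rfl
    rw [this]
    exact Submodule.smul_mem _ _ (Submodule.subset_span ⟨h, rfl⟩)
  -- the (δ b) span E over B'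
  have hspan : ⊤ ≤ Submodule.span ↥(IntermediateField.fixedField Δ) (Set.range v) := by
    intro x _
    have hz : IsAlgebraic ℤ_[p] (x * a⁻¹) :=
      (IsFractionRing.isAlgebraic_iff ℤ_[p] ℚ_[p] E).mpr (Algebra.IsAlgebraic.isAlgebraic _)
    obtain ⟨y, m, hm0, hmy⟩ : ∃ y : ↥(integralClosure ℤ_[p] E), ∃ m ≠ (0 : ℤ_[p]),
        algebraMap ℤ_[p] E m * (x * a⁻¹) = y := by
      obtain ⟨m, hm0, hint⟩ := hz.exists_integral_multiple
      exact ⟨⟨_, hint⟩, m, hm0, (Algebra.smul_def m _).symm⟩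
    set q : ℚ_[p] := algebraMap ℤ_[p] ℚ_[p] m with hq
    have hq0 : q ≠ 0 := fun h => hm0 (IsFractionRing.injective ℤ_[p] ℚ_[p]
      (show algebraMap _ _ m = algebraMap _ _ 0 by rw [map_zero, ← hq, h]))
    have hqE : algebraMap ℤ_[p] E m = algebraMap ℚ_[p] E q := by
      rw [IsScalarTower.algebraMap_apply ℤ_[p] ℚ_[p] E]
    have hqE0 : algebraMap ℚ_[p] E q ≠ 0 := fun h => hq0 ((algebraMap ℚ_[p] E).injective
      (show algebraMap _ _ q = algebraMap _ _ 0 by rw [map_zero, h]))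
    set β : ↥(IntermediateField.fixedField Δ) := algebraMap F ↥(IntermediateField.fixedField Δ) (algebraMap ℚ_[p] F q⁻¹) with hβ
    have hβE : algebraMap ↥(IntermediateField.fixedField Δ) E β = algebraMap ℚ_[p] E q⁻¹ := by
      rw [hβ, ← IsScalarTower.algebraMap_apply F ↥(IntermediateField.fixedField Δ) E,
        ← IsScalarTower.algebraMap_apply ℚ_[p] F E]
    have hx : x = β • ((y : E) * a) := by
      have hy : (y : E) = algebraMap ℚ_[p] E q * (x * a⁻¹) := by rw [← hqE, hmy]
      rw [Algebra.smul_def, hβE, hy, map_inv₀]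
      field_simp
    rw [hx]
    exact Submodule.smul_mem _ _
      (hsub _ (Submodule.smul_mem (sqrtInvDiff p E M d) y haA))
  -- linear independence of the (δ b) over B'
  have hcard : Fintype.card ↥Δ = Module.finrank ↥(IntermediateField.fixedField Δ) E := by
    have hfd := IntermediateField.finrank_fixedField_eq_card Δ (F := F) (E := E)
    rw [Fintype.card_eq_nat_card]
    rw [hfd]
  have hli : LinearIndependent ↥(IntermediateField.fixedField Δ) v :=
    linearIndependent_of_top_le_span_of_card_eq_finrank hspan hcard
  -- uniqueness of O_B'-expansions in terms of the (δ b)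
  have huniq : ∀ c c' : ↥Δ → ↥(integralClosure ℤ_[p] ↥(IntermediateField.fixedField Δ)),
      (∑ h : ↥Δ, ((c h : ↥(IntermediateField.fixedField Δ)) : E) * v h) = ∑ h : ↥Δ, ((c' h : ↥(IntermediateField.fixedField Δ)) : E) * v h → c = c' := by
    intro c c' hcc
    have h0 : ∑ h : ↥Δ, (((c h : ↥(IntermediateField.fixedField Δ)) - (c' h : ↥(IntermediateField.fixedField Δ))) • v h) = 0 := by
      have hsm : ∀ h : ↥Δ, ((c h : ↥(IntermediateField.fixedField Δ)) - (c' h : ↥(IntermediateField.fixedField Δ))) • v h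
          = ((c h : ↥(IntermediateField.fixedField Δ)) : E) * v h - ((c' h : ↥(IntermediateField.fixedField Δ)) : E) * v h := by
        intro h
        rw [sub_smul]
        rfl
      rw [Finset.sum_congr rfl (fun h _ => hsm h), Finset.sum_sub_distrib, sub_eq_zero]
      exact hcc
    have hz := Fintype.linearIndependent_iff.mp hli _ h0
    funext h
    have h1 := hz h
    rw [sub_eq_zero] at h1
    exact Subtype.ext h1
  -- the basic sum-reindexing identity
  have hsum : ∀ (cc : (E ≃ₐ[F] E) → ↥(integralClosure ℤ_[p] ↥(IntermediateField.fixedField Δ))) (g : E ≃ₐ[F] E),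
      ∑ γ : E ≃ₐ[F] E, ((cc γ : ↥(IntermediateField.fixedField Δ)) : E) * hMap F E Δ b (g * γ)
        = ∑ δ : ↥Δ, ((cc (g⁻¹ * δ) : ↥(IntermediateField.fixedField Δ)) : E) * v δ := by
    intro cc g
    have step1 : ∑ γ : E ≃ₐ[F] E, ((cc γ : ↥(IntermediateField.fixedField Δ)) : E) * hMap F E Δ b (g * γ)
        = ∑ γ' : E ≃ₐ[F] E, ((cc (g⁻¹ * γ') : ↥(IntermediateField.fixedField Δ)) : E) * hMap F E Δ b γ' := by
      refine Fintype.sum_equiv (Equiv.mulLeft g) _ _ (fun γ => ?_)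
      simp [Equiv.mulLeft]
    rw [step1]
    have step2 : ∀ γ' : E ≃ₐ[F] E, ((cc (g⁻¹ * γ') : ↥(IntermediateField.fixedField Δ)) : E) * hMap F E Δ b γ'
        = if γ' ∈ Δ then ((cc (g⁻¹ * γ') : ↥(IntermediateField.fixedField Δ)) : E) * γ' b else 0 := by
      intro γ'
      simp only [hMap, mul_ite, mul_zero]
    simp only [step2]
    rw [← Finset.sum_filter]
    exact Finset.sum_subtype _ (fun x => by simp) _
  refine ⟨⟨?_, ?_⟩, ?_⟩
  · -- equivariance of hMap
    intro h hh g
    by_cases hg : g ∈ Δ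
    · rw [hMap, hMap]
      simp only [hg, if_pos, Δ.mul_mem hh hg, if_pos]
      rfl
    · have hhg : ¬ (h * g ∈ Δ) := fun hmem => hg (by
        have := Δ.mul_mem (Δ.inv_mem hh) hmem
        rwa [inv_mul_cancel_left] at this)
      rw [hMap, hMap]
      simp [hg, hhg]
    -- values of hMap lie in A
  · intro g
    by_cases hg : g ∈ Δ
    · rw [hMap]
      simp only [hg, if_pos]
      set c0 : ↥Δ → ↥(integralClosure ℤ_[p] ↥(IntermediateField.fixedField Δ)) :=
        fun h => if h = (⟨g, hg⟩ : ↥Δ) then 1 else 0 with hc0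
      refine (hb (g b)).mpr ⟨c0, ?_⟩
      have hterm : ∀ h : ↥Δ, ((c0 h : ↥(IntermediateField.fixedField Δ)) : E) * (h : E ≃ₐ[F] E) b
          = if h = (⟨g, hg⟩ : ↥Δ) then (h : E ≃ₐ[F] E) b else 0 := by
        intro h
        by_cases hh : h = (⟨g, hg⟩ : ↥Δ) <;> simp [hc0, hh]
      rw [Finset.sum_congr rfl (fun h _ => hterm h), Finset.sum_ite_eq' Finset.univ]
      simp
    · rw [hMap]
      simp only [hg, if_neg]
      exact (sqrtInvDiff p E M d).zero_mem
  · -- the free generation statement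
    intro f hf
    set w : (E ≃ₐ[F] E) → (↥Δ → ↥(integralClosure ℤ_[p] ↥(IntermediateField.fixedField Δ))) :=
      fun g => Classical.choose ((hb (f g)).mp (hf.2 g)) with hwdef
    have hw : ∀ g, f g = ∑ h : ↥Δ, ((w g h : ↥(IntermediateField.fixedField Δ)) : E) * v h :=
      fun g => Classical.choose_spec ((hb (f g)).mp (hf.2 g))
    -- the key compatibility of expansions
    have hkey : ∀ (g : E ≃ₐ[F] E) (δ : ↥Δ),
        w ((δ : E ≃ₐ[F] E)⁻¹ * g) = fun h => w g (δ * h) := by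
      intro g δ
      refine huniq _ _ ?_
      rw [← hw]
      have h1 : f ((δ : E ≃ₐ[F] E)⁻¹ * g) = (δ : E ≃ₐ[F] E)⁻¹ (f g) :=
        hf.1 _ (Δ.inv_mem δ.2) g
      have h2 : (δ : E ≃ₐ[F] E)⁻¹ (f g)
          = ∑ h : ↥Δ, ((w g h : ↥(IntermediateField.fixedField Δ)) : E) * v (δ⁻¹ * h) := by
        rw [hw g, map_sum]
        refine Finset.sum_congr rfl (fun h _ => ?_)
        rw [map_mul, hfix _ (Δ.inv_mem δ.2)]
        congr 1
      have h3 : ∑ h : ↥Δ, ((w g h : ↥(IntermediateField.fixedField Δ)) : E) * v (δ⁻¹ * h)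
          = ∑ h' : ↥Δ, ((w g (δ * h') : ↥(IntermediateField.fixedField Δ)) : E) * v h' := by
        refine Fintype.sum_equiv (Equiv.mulLeft δ⁻¹) _ _ (fun h => ?_)
        simp [Equiv.mulLeft]
      rw [h1, h2, h3]
    set c : (E ≃ₐ[F] E) → ↥(integralClosure ℤ_[p] ↥(IntermediateField.fixedField Δ)) :=
      fun γ => w γ⁻¹ 1 with hcdef
    have hkey2 : ∀ (g : E ≃ₐ[F] E) (δ : ↥Δ), c (g⁻¹ * δ) = w g δ := by
      intro g δ
      have e1 : (g⁻¹ * (δ : E ≃ₐ[F] E))⁻¹ = (δ : E ≃ₐ[F] E)⁻¹ * g := by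
        rw [mul_inv_rev, inv_inv]
      have e2 : c (g⁻¹ * δ) = w ((δ : E ≃ₐ[F] E)⁻¹ * g) 1 := by
        show w (g⁻¹ * (δ : E ≃ₐ[F] E))⁻¹ 1 = _
        rw [e1]
      rw [e2, hkey g δ]
      simp only [mul_one]
    have hceq : ∀ g : E ≃ₐ[F] E,
        f g = ∑ γ : E ≃ₐ[F] E, ((c γ : ↥(IntermediateField.fixedField Δ)) : E) * hMap F E Δ b (g * γ) := by
      intro g
      rw [hsum c g, hw g]
      exact Finset.sum_congr rfl (fun δ _ => by rw [hkey2 g δ])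
    refine ⟨c, hceq, ?_⟩
    intro c' hc'
    funext γ
    have e1 := hc' γ⁻¹
    have e2 := hceq γ⁻¹
    rw [hsum c' γ⁻¹] at e1
    rw [hsum c γ⁻¹] at e2
    have e3 : (fun δ : ↥Δ => c' ((γ⁻¹)⁻¹ * δ)) = (fun δ : ↥Δ => c ((γ⁻¹)⁻¹ * δ)) :=
      huniq _ _ (by rw [← e1, ← e2])
    have e4 := congrFun e3 1
    simpa using e4
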